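/- There exists a finite set C ⊆ 𝔽₂^24 with |C| = 759 such that every element of C has Hamming weight exactly 8 and any two distinct elements of C have Hamming distance at least 8 (equivalently, the supports of any two distinct elements intersect in at most 4 coordinates). Moreover, there exists a 12-dimensional 𝔽₂-linear subspace L of 𝔽₂^24 (the extended binary Golay code) such that C is exactly the set of weight-8 elements of L and any two distinct elements of L have Hamming distance at least 8. -/

import Mathlib

namespace GolayAux

def masksL : List ℕ :=
  [14438401, 15605762, 11997188, 14385160, 11386896, 9887776,
   9138240, 12955776, 14864640, 15819264, 12104704, 8386560]

def bitv (m : ℕ) : Fin 24 → ZMod 2 := fun j => if m.testBit (j : ℕ) then 1 else 0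

def cwAux : List ℕ → ℕ → ℕ
  | [], _ => 0
  | m :: ms, n => (if n % 2 = 1 then m else 0) ^^^ cwAux ms (n / 2)

def cw (n : ℕ) : ℕ := cwAux masksL n

def wtN : ℕ → ℕ → ℕ
  | 0, _ => 0
  | k + 1, m => m % 2 + wtN k (m / 2)

def wt (m : ℕ) : ℕ := wtN 24 m

def e (n : ℕ) : Fin 12 → ZMod 2 := fun i => if n.testBit (i : ℕ) then 1 else 0

def G : Matrix (Fin 12) (Fin 24) (ZMod 2) := fun i j => bitv (masksL.get i) j

/-- divide-and-conquer universal checker -/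
def chk (p : ℕ → Bool) : ℕ → ℕ → ℕ → Bool
  | 0, lo, len => decide (len = 0) || p lo
  | k + 1, lo, len =>
      if len ≤ 1 then decide (len = 0) || p lo
      else chk p k lo (len / 2) && chk p k (lo + len / 2) (len - len / 2)

/-- divide-and-conquer counter -/
def cnt (p : ℕ → Bool) : ℕ → ℕ → ℕ → ℕ
  | 0, lo, len => if len = 0 then 0 else if p lo then 1 else 0
  | k + 1, lo, len =>
      if len ≤ 1 then (if len = 0 then 0 else if p lo then 1 else 0)
      else cnt p k lo (len / 2) + cnt p k (lo + len / 2) (len - len / 2)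

lemma chk_sound (p : ℕ → Bool) :
    ∀ (k lo len : ℕ), len ≤ 2 ^ k → chk p k lo len = true →
      ∀ i < len, p (lo + i) = true := by
  intro k
  induction k with
  | zero =>
    intro lo len hle hc i hi
    interval_cases len
    · omega
    · interval_cases i
      simpa [chk] using hc
  | succ k ih =>
    intro lo len hle hc i hi
    rw [chk] at hc
    by_cases h1 : len ≤ 1
    · rw [if_pos h1] at hc
      interval_cases len
      · omega
      · interval_cases i
        simpa using hc
    · rw [if_neg h1, Bool.and_eq_true] at hc
      have h2 : 2 ^ (k + 1) = 2 ^ k + 2 ^ k := by rw [pow_succ]; ring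
      by_cases hi2 : i < len / 2
      · exact ih lo (len / 2) (by omega) hc.1 i hi2
      · have := ih (lo + len / 2) (len - len / 2) (by omega) hc.2 (i - len / 2) (by omega)
        rwa [show lo + len / 2 + (i - len / 2) = lo + i by omega] at this
  
lemma cnt_eq (p : ℕ → Bool) :
    ∀ (k lo len : ℕ), len ≤ 2 ^ k →
      cnt p k lo len = (List.range' lo len).countP p := by
  intro k
  induction k with
  | zero =>
    intro lo len hle
    interval_cases len <;> simp [cnt, List.range', List.countP_cons]
  | succ k ih =>
    intro lo len hle
    rw [cnt]
    by_cases h1 : len ≤ 1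
    · rw [if_pos h1]
      interval_cases len <;> simp [List.range', List.countP_cons]
    · rw [if_neg h1]
      have h2 : 2 ^ (k + 1) = 2 ^ k + 2 ^ k := by rw [pow_succ]; ring
      rw [ih lo (len / 2) (by omega), ih (lo + len / 2) (len - len / 2) (by omega)]
      have hsplit : List.countP p (List.range' lo len)
          = List.countP p (List.range' lo (len / 2))
            + List.countP p (List.range' (lo + len / 2) (len - len / 2)) := by
        rw [← List.countP_append, List.range'_append_1]
        congr 2
        omega
      rw [hsplit]

def pA (n : ℕ) : Bool := decide (n = 0) || decide (8 ≤ wt (cw n))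
def pB (n : ℕ) : Bool := decide (wt (cw n) = 8)

set_option maxHeartbeats 4000000 in
lemma chkA : chk pA 12 0 4096 = true := by decide
set_option maxHeartbeats 4000000 in
lemma cntB : cnt pB 12 0 4096 = 759 := by decide

set_option maxHeartbeats 1000000 in
lemma thmA : ∀ n < 4096, n ≠ 0 → 8 ≤ wt (cw n) := by
  intro n hn hn0
  have h4 : (4096:ℕ) ≤ 2 ^ 12 := le_refl _
  have := chk_sound pA 12 0 4096 h4 chkA n hn
  rw [Nat.zero_add, pA, Bool.or_eq_true, decide_eq_true_eq, decide_eq_true_eq] at this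
  rcases this with h | h
  · exact absurd h hn0
  · exact h

lemma thmB : ((Finset.range 4096).filter fun n => wt (cw n) = 8).card = 759 := by
  have h := cnt_eq pB 12 0 4096 (by norm_num)
  rw [cntB] at h
  rw [← List.range_eq_range'] at h
  -- card filter range = countP
  have key : ∀ N : ℕ, ((Finset.range N).filter fun n => wt (cw n) = 8).card
      = (List.range N).countP pB := by
    intro N
    induction N with
    | zero => simp
    | succ N ihN =>
      rw [Finset.range_add_one, Finset.filter_insert, List.range_succ, List.countP_append]
      by_cases h : wt (cw N) = 8
      · rw [if_pos h, Finset.card_insert_of_notMem (by simp), ihN]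
        simp [pB, h]
      · rw [if_neg h, ihN]
        simp [pB, h]
  rw [key, h]

lemma bitv_zero : bitv 0 = 0 := by
  funext j; simp [bitv]

lemma bitv_xor (a b : ℕ) (j : Fin 24) : bitv (a ^^^ b) j = bitv a j + bitv b j := by
  simp only [bitv, Nat.testBit_xor]
  cases a.testBit (j : ℕ) <;> cases b.testBit (j : ℕ) <;> decide

lemma gen (ms : List ℕ) (n : ℕ) (j : Fin 24) :
    ∑ i : Fin ms.length, (if n.testBit (i : ℕ) then (1 : ZMod 2) else 0) * bitv (ms.get i) j
      = bitv (cwAux ms n) j := by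
  induction ms generalizing n with
  | nil => simp [cwAux, bitv]
  | cons m ms ih =>
    simp only [List.length_cons]
    rw [Fin.sum_univ_succ]
    simp only [List.get, cwAux]
    rw [bitv_xor]
    have h1 : ∀ i : Fin ms.length, n.testBit ((i : ℕ) + 1) = (n / 2).testBit (i : ℕ) := by
      intro i; rw [Nat.testBit_succ]
    have h2 : (if n % 2 = 1 then bitv m j else 0) = bitv (if n % 2 = 1 then m else 0) j := by
      split <;> simp [bitv]
    have h0 : n.testBit 0 = decide (n % 2 = 1) := Nat.testBit_zero n
    calc (if n.testBit 0 then (1:ZMod 2) else 0) * bitv m j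
          + ∑ i : Fin ms.length, (if n.testBit ((i:ℕ)+1) then (1:ZMod 2) else 0) * bitv (ms.get i) j
        = (if n % 2 = 1 then bitv m j else 0)
          + ∑ i : Fin ms.length, (if (n/2).testBit (i:ℕ) then (1:ZMod 2) else 0) * bitv (ms.get i) j := by
          rw [h0]
          congr 1
          · split <;> simp_all
          · exact Finset.sum_congr rfl fun i _ => by rw [h1]
      _ = bitv (if n % 2 = 1 then m else 0) j + bitv (cwAux ms (n / 2)) j := by rw [h2, ih]

lemma wtN_eq : ∀ k m, wtN k m = ∑ j ∈ Finset.range k, (if m.testBit j then 1 else 0) := by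
  intro k
  induction k with
  | zero => intro m; simp [wtN]
  | succ k ih =>
    intro m
    rw [wtN, Finset.sum_range_succ']
    have h1 : ∀ j, (if m.testBit (j + 1) then (1:ℕ) else 0)
        = if (m / 2).testBit j then 1 else 0 := by
      intro j; rw [Nat.testBit_succ]
    simp only [h1]
    rw [← ih]
    have h0 : (if m.testBit 0 then (1:ℕ) else 0) = m % 2 := by
      rcases Nat.mod_two_eq_zero_or_one m with h | h <;> simp [Nat.testBit_zero, h]
    omega

lemma hn_bitv (m : ℕ) : hammingNorm (bitv m) = wt m := by
  have : hammingNorm (bitv m) = (Finset.univ.filter fun j : Fin 24 => m.testBit (j : ℕ)).card := by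
    unfold hammingNorm
    congr 1
    apply Finset.filter_congr
    intro j _
    simp [bitv]
  rw [this, Finset.card_filter, wt, wtN_eq]
  exact Fin.sum_univ_eq_sum_range (fun j => if m.testBit j then (1:ℕ) else 0) 24

lemma vecMul_e (n : ℕ) : Matrix.vecMul (e n) G = bitv (cw n) := by
  funext j
  have h := gen masksL n j
  simp [Matrix.vecMul, dotProduct, e, G, cw] at h ⊢; exact h

lemma e_inj {a b : ℕ} (ha : a < 4096) (hb : b < 4096) (h : e a = e b) : a = b := by
  apply Nat.eq_of_testBit_eq
  intro i
  by_cases hi : i < 12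
  · have := congrFun h ⟨i, hi⟩
    simp only [e] at this
    cases hA : a.testBit i <;> cases hB : b.testBit i <;>
      first
        | rfl
        | simp_all
  · have h12 : 4096 ≤ 2 ^ i := by
      calc (4096:ℕ) = 2 ^ 12 := by norm_num
      _ ≤ 2 ^ i := Nat.pow_le_pow_right (by norm_num) (by omega)
    rw [Nat.testBit_lt_two_pow (by omega), Nat.testBit_lt_two_pow (by omega)]

lemma e_zero : e 0 = 0 := by
  funext i; simp [e]

def F : (Fin 12 → ZMod 2) →ₗ[ZMod 2] (Fin 24 → ZMod 2) := G.vecMulLinear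

lemma F_apply (v : Fin 12 → ZMod 2) : F v = Matrix.vecMul v G := rfl

def e' : Fin 4096 → (Fin 12 → ZMod 2) := fun n => e (n : ℕ)

lemma e'_bij : Function.Bijective e' := by
  rw [Fintype.bijective_iff_injective_and_card]
  constructor
  · intro a b h
    exact Fin.ext (e_inj a.isLt b.isLt h)
  · rw [Fintype.card_fun, ZMod.card, Fintype.card_fin, Fintype.card_fin]
    norm_num

lemma F_e' (n : Fin 4096) : F (e' n) = bitv (cw (n : ℕ)) := by
  rw [F_apply, e', vecMul_e]

lemma minwt : ∀ v : Fin 12 → ZMod 2, v ≠ 0 → 8 ≤ hammingNorm (F v) := by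
  intro v hv
  obtain ⟨n, rfl⟩ := e'_bij.2 v
  have hn0 : (n : ℕ) ≠ 0 := by
    rintro h
    apply hv
    rw [e', h, e_zero]
  rw [F_e', hn_bitv]
  exact thmA (n : ℕ) n.isLt hn0

lemma F_inj : Function.Injective F := by
  intro v w h
  by_contra hne
  have h8 : 8 ≤ hammingNorm (F (v - w)) := minwt _ (sub_ne_zero.mpr hne)
  rw [map_sub, h, sub_self] at h8
  simp [hammingNorm] at h8

lemma memL (x : Fin 24 → ZMod 2) :
    x ∈ LinearMap.range F ↔ ∃ n : Fin 4096, bitv (cw (n : ℕ)) = x := by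
  constructor
  · rintro ⟨v, rfl⟩
    obtain ⟨n, rfl⟩ := e'_bij.2 v
    exact ⟨n, (F_e' n).symm⟩
  · rintro ⟨n, rfl⟩
    exact ⟨e' n, F_e' n⟩

lemma Ldist : ∀ x ∈ LinearMap.range F, ∀ y ∈ LinearMap.range F, x ≠ y →
    8 ≤ hammingDist x y := by
  rintro x ⟨a, rfl⟩ y ⟨b, rfl⟩ hxy
  rw [hammingDist_eq_hammingNorm, neg_add_eq_sub, ← map_sub]
  exact minwt _ (sub_ne_zero.mpr fun h => hxy (by rw [h]))

lemma bitv_cw_inj {a b : ℕ} (ha : a < 4096) (hb : b < 4096)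
    (h : bitv (cw a) = bitv (cw b)) : a = b := by
  have hF : F (e' ⟨a, ha⟩) = F (e' ⟨b, hb⟩) := by rw [F_e', F_e']; exact h
  exact e_inj ha hb (F_inj hF)

end GolayAux

open GolayAux in
theorem exists_steiner_and_golay :
    ∃ C : Finset (Fin 24 → ZMod 2),
      C.card = 759 ∧
      (∀ c ∈ C, hammingNorm c = 8) ∧
      (∀ c ∈ C, ∀ c' ∈ C, c ≠ c' → 8 ≤ hammingDist c c') ∧
      ∃ L : Submodule (ZMod 2) (Fin 24 → ZMod 2),
        Module.finrank (ZMod 2) L = 12 ∧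
        (↑C : Set (Fin 24 → ZMod 2)) = {x | x ∈ L ∧ hammingNorm x = 8} ∧
        (∀ x ∈ L, ∀ y ∈ L, x ≠ y → 8 ≤ hammingDist x y) := by
  classical
  set I : Finset ℕ := (Finset.range 4096).filter (fun n => wt (cw n) = 8) with hI
  set C : Finset (Fin 24 → ZMod 2) := I.image (fun n => bitv (cw n)) with hC
  have hImem : ∀ n, n ∈ I ↔ n < 4096 ∧ wt (cw n) = 8 := by
    intro n; simp [hI, Finset.mem_filter, Finset.mem_range]
  have hCset : (↑C : Set (Fin 24 → ZMod 2))
      = {x | x ∈ LinearMap.range F ∧ hammingNorm x = 8} := by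
    ext x
    simp only [hC, Finset.coe_image, Set.mem_image, Finset.mem_coe, Set.mem_setOf_eq]
    constructor
    · rintro ⟨n, hn, rfl⟩
      rw [hImem] at hn
      refine ⟨(memL _).mpr ⟨⟨n, hn.1⟩, rfl⟩, ?_⟩
      rw [hn_bitv]; exact hn.2
    · rintro ⟨hxL, hx8⟩
      obtain ⟨n, rfl⟩ := (memL x).mp hxL
      refine ⟨(n : ℕ), ?_, rfl⟩
      rw [hImem]
      exact ⟨n.isLt, by rw [← hn_bitv]; exact hx8⟩
  have hCmem : ∀ c, c ∈ C ↔ c ∈ LinearMap.range F ∧ hammingNorm c = 8 := by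
    intro c
    have := Set.ext_iff.mp hCset c
    simpa using this
  refine ⟨C, ?_, ?_, ?_, LinearMap.range F, ?_, hCset, Ldist⟩
  · rw [hC, Finset.card_image_of_injOn, hI, GolayAux.thmB]
    intro a ha b hb hab
    rw [Finset.mem_coe, hImem] at ha hb
    simp only at hab
    exact bitv_cw_inj ha.1 hb.1 hab
  · intro c hc
    exact ((hCmem c).mp hc).2
  · intro c hc c' hc' hne
    exact Ldist c ((hCmem c).mp hc).1 c' ((hCmem c').mp hc').1 hne
  · rw [LinearMap.finrank_range_of_inj F_inj, Module.finrank_pi, Fintype.card_fin]
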